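/- Let J be the 2×2 matrix with rows (0, −1) and (1, 0), and let U = {(X_1, X_2) ∈ ℝ² × ℝ² : X_1 ≠ X_2}. Define V : U → ℝ² × ℝ² by V(X_1, X_2) = ( −J(X_2 − X_1)/‖X_2 − X_1‖² , J(X_2 − X_1)/‖X_2 − X_1‖² ), where ‖·‖ is the Euclidean norm. Then there exists no differentiable function φ : U → ℝ such that for every (X_1,X_2) ∈ U and every (v_1,v_2) ∈ ℝ²×ℝ², the derivative of φ at (X_1,X_2) evaluated at (v_1,v_2) equals ⟨V(X_1,X_2), (v_1,v_2)⟩, the standard inner product on ℝ²×ℝ² ≅ ℝ⁴. -/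

import Mathlib

/-- Let `J = [[0,−1],[1,0]]`, `U = {(X_1,X_2) : X_1 ≠ X_2}` and
`V(X_1,X_2) = (−J(X_2−X_1)/‖X_2−X_1‖², J(X_2−X_1)/‖X_2−X_1‖²)`. There is no
differentiable `φ : U → ℝ` whose derivative at each point of `U` is the inner
product with `V`, i.e. `V` is not a gradient on `U`. -/
theorem stmt_11
    (J : Matrix (Fin 2) (Fin 2) ℝ) (hJ : J = Matrix.of ![![0, -1], ![1, 0]])
    (U : Set ((Fin 2 → ℝ) × (Fin 2 → ℝ)))
    (hU : U = {p | p.1 ≠ p.2})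
    (V : (Fin 2 → ℝ) × (Fin 2 → ℝ) → (Fin 2 → ℝ) × (Fin 2 → ℝ))
    (hV : ∀ p : (Fin 2 → ℝ) × (Fin 2 → ℝ),
      V p = ((-(∑ j, (p.2 j - p.1 j) ^ 2)⁻¹) • J.mulVec (p.2 - p.1),
             (∑ j, (p.2 j - p.1 j) ^ 2)⁻¹ • J.mulVec (p.2 - p.1))) :
    ¬ ∃ φ : (Fin 2 → ℝ) × (Fin 2 → ℝ) → ℝ,
        (∀ p ∈ U, DifferentiableAt ℝ φ p) ∧
        (∀ p ∈ U, ∀ v : (Fin 2 → ℝ) × (Fin 2 → ℝ),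
          fderiv ℝ φ p v = (∑ j, (V p).1 j * v.1 j) + (∑ j, (V p).2 j * v.2 j)) := by
  rintro ⟨φ, hdiff, hgrad⟩
  set g : ℝ → (Fin 2 → ℝ) × (Fin 2 → ℝ) := fun t => (0, ![Real.cos t, Real.sin t]) with hg_def
  have hmem : ∀ t, g t ∈ U := by
    intro t
    rw [hU]
    simp only [Set.mem_setOf_eq, hg_def]
    intro h
    have h0 : Real.cos t = 0 := by simpa using (congrFun h 0).symm
    have h1 : Real.sin t = 0 := by simpa using (congrFun h 1).symm
    have := Real.sin_sq_add_cos_sq t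
    rw [h0, h1] at this; norm_num at this
  have hg : ∀ t, HasDerivAt g (0, ![-Real.sin t, Real.cos t]) t := by
    intro t
    refine HasDerivAt.prodMk (hasDerivAt_const t (0 : Fin 2 → ℝ)) ?_
    rw [hasDerivAt_pi]
    intro i
    fin_cases i
    · simpa using Real.hasDerivAt_cos t
    · simpa using Real.hasDerivAt_sin t
  have key : ∀ t, HasDerivAt (fun t => φ (g t)) 1 t := by
    intro t
    have hd := (hdiff (g t) (hmem t)).hasFDerivAt
    have h2 := hd.comp_hasDerivAt t (hg t)
    have hv := hgrad (g t) (hmem t) (0, ![-Real.sin t, Real.cos t])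
    rw [hv] at h2
    refine h2.congr_deriv ?_
    symm
    rw [hV]
    simp only [hJ, hg_def, Fin.sum_univ_two]
    simp [Matrix.mulVec, dotProduct, Fin.sum_univ_two, Real.sin_sq_add_cos_sq]
    nlinarith [Real.sin_sq_add_cos_sq t]
  have hint : φ (g (2 * Real.pi)) - φ (g 0) = ∫ t in (0:ℝ)..(2 * Real.pi), (1:ℝ) := by
    refine (intervalIntegral.integral_eq_sub_of_hasDerivAt (fun t _ => key t) ?_).symm
    exact intervalIntegrable_const
  have hloop : g (2 * Real.pi) = g 0 := by
    simp [hg_def, Real.cos_two_pi, Real.sin_two_pi]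
  rw [hloop] at hint
  simp at hint
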